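/- Fix n ≥ 1 and 1 ≤ m ≤ n. Let M be a symmetric positive-definite n×n real matrix, V : ℝⁿ → ℝ smooth, and μ : ℝⁿ → ℝ^{m×n} smooth with rank μ(q) = m for every q ∈ ℝⁿ. Let (q₀, v₀) ∈ ℝⁿ×ℝⁿ satisfy the constraint μ(q₀)v₀ = 0. Then there exists δ > 0 such that there is a unique pair (q(t), λ(t)), with q twice continuously differentiable and λ continuous on |t−t₀| < δ, satisfying M q̈(t) = −∇V(q(t)) + μ(q(t))ᵀλ(t) and μ(q(t)) q̇(t) = 0 for all |t−t₀| < δ, with q(t₀) = q₀ and q̇(t₀) = v₀. -/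

import Mathlib

open Matrix Metric

/-- Gradient of a potential `V : ℝⁿ → ℝ`. -/
noncomputable def gradV {n : ℕ} (V : (Fin n → ℝ) → ℝ) (q : Fin n → ℝ) : Fin n → ℝ :=
  fun i => fderiv ℝ V q (Pi.single i 1)

section AuxSmooth

variable {X : Type*} [NormedAddCommGroup X] [NormedSpace ℝ X]

private lemma contDiff_finset_prod' {ι : Type*} {s : Finset ι} {f : ι → X → ℝ}
    (h : ∀ i ∈ s, ContDiff ℝ (⊤ : ℕ∞) (f i)) :
    ContDiff ℝ (⊤ : ℕ∞) fun x => ∏ i ∈ s, f i x := by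
  classical
  induction s using Finset.induction with
  | empty => simpa using contDiff_const
  | @insert a s hni ih =>
    simp only [Finset.prod_insert hni]
    exact (h a (Finset.mem_insert_self a s)).mul
      (ih fun i hi => h i (Finset.mem_insert_of_mem hi))

private lemma contDiff_det' {k : ℕ} {f : X → Matrix (Fin k) (Fin k) ℝ}
    (hf : ∀ i j, ContDiff ℝ (⊤ : ℕ∞) fun x => f x i j) :
    ContDiff ℝ (⊤ : ℕ∞) fun x => (f x).det := by
  simp only [Matrix.det_apply']
  exact ContDiff.sum fun σ _ =>
    (contDiff_const.mul (contDiff_finset_prod' fun i _ => hf (σ i) i))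

private lemma contDiff_inv_entry' {k : ℕ} {f : X → Matrix (Fin k) (Fin k) ℝ}
    (hf : ∀ i j, ContDiff ℝ (⊤ : ℕ∞) fun x => f x i j)
    (hdet : ∀ x, (f x).det ≠ 0) (i j : Fin k) :
    ContDiff ℝ (⊤ : ℕ∞) fun x => (f x)⁻¹ i j := by
  have h1 : ∀ x, (f x)⁻¹ i j = ((f x).det)⁻¹ * (f x).adjugate i j := by
    intro x
    rw [Matrix.inv_def, Ring.inverse_eq_inv']
    simp [Matrix.smul_apply, smul_eq_mul]
  simp only [h1, Matrix.adjugate_apply]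
  refine ((contDiff_det' hf).inv hdet).mul (contDiff_det' fun a b => ?_)
  by_cases haj : a = j
  · simp only [Matrix.updateRow_apply, haj, if_pos rfl]
    exact contDiff_const
  · simp only [Matrix.updateRow_apply, if_neg haj]
    exact hf a b

private lemma contDiff_mulVec' {a b : ℕ} {A : X → Matrix (Fin a) (Fin b) ℝ} {v : X → Fin b → ℝ}
    (hA : ∀ i j, ContDiff ℝ (⊤ : ℕ∞) fun x => A x i j) (hv : ContDiff ℝ (⊤ : ℕ∞) v) :
    ContDiff ℝ (⊤ : ℕ∞) fun x => A x *ᵥ v x := by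
  rw [contDiff_pi]
  intro i
  simp only [Matrix.mulVec, dotProduct]
  exact ContDiff.sum fun j _ => (hA i j).mul (contDiff_pi.mp hv j)

end AuxSmooth

set_option maxHeartbeats 2000000 in
theorem simple_mechanical_dae_existence_uniqueness {n m : ℕ}
    (hn : 1 ≤ n) (hm1 : 1 ≤ m) (hmn : m ≤ n) (t₀ : ℝ)
    (M : Matrix (Fin n) (Fin n) ℝ) (hM : M.PosDef)
    (V : (Fin n → ℝ) → ℝ) (hV : ContDiff ℝ (⊤ : ℕ∞) V)
    (μ : (Fin n → ℝ) → Matrix (Fin m) (Fin n) ℝ)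
    (hμ : ContDiff ℝ (⊤ : ℕ∞) fun q => fun α i => μ q α i)
    (hrank : ∀ q, (μ q).rank = m)
    (q₀ v₀ : Fin n → ℝ) (hcons : μ q₀ *ᵥ v₀ = 0) :
    ∃ δ > (0 : ℝ), ∃ (q : ℝ → Fin n → ℝ) (lam : ℝ → Fin m → ℝ),
      (ContDiffOn ℝ 2 q (ball t₀ δ) ∧ ContinuousOn lam (ball t₀ δ) ∧
        (∀ t ∈ ball t₀ δ,
          M *ᵥ deriv (deriv q) t = -gradV V (q t) + (μ (q t))ᵀ *ᵥ lam t ∧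
          μ (q t) *ᵥ deriv q t = 0) ∧
        q t₀ = q₀ ∧ deriv q t₀ = v₀) ∧
      (∀ (q' : ℝ → Fin n → ℝ) (lam' : ℝ → Fin m → ℝ),
        (ContDiffOn ℝ 2 q' (ball t₀ δ) ∧ ContinuousOn lam' (ball t₀ δ) ∧
          (∀ t ∈ ball t₀ δ,
            M *ᵥ deriv (deriv q') t = -gradV V (q' t) + (μ (q' t))ᵀ *ᵥ lam' t ∧
            μ (q' t) *ᵥ deriv q' t = 0) ∧
          q' t₀ = q₀ ∧ deriv q' t₀ = v₀) →
        ∀ t ∈ ball t₀ δ, q' t = q t ∧ lam' t = lam t) := by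
  classical
  have htop : ((⊤ : ℕ∞) : WithTop ℕ∞) + 1 ≤ ((⊤ : ℕ∞) : WithTop ℕ∞) := le_of_eq rfl
  have hone : (1 : WithTop ℕ∞) ≤ ((⊤ : ℕ∞) : WithTop ℕ∞) := by exact_mod_cast le_top
  have hMdet : IsUnit M.det := isUnit_iff_ne_zero.mpr hM.det_pos.ne'
  set Mi := M⁻¹ with hMidef
  have hMi : Mi.PosDef := hM.inv
  -- rank facts
  have hsurj : ∀ q, Function.Surjective (μ q).mulVecLin := by
    intro q
    rw [← LinearMap.range_eq_top]
    apply Submodule.eq_top_of_finrank_eq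
    rw [Module.finrank_pi]
    simpa [Matrix.rank, Fintype.card_fin] using hrank q
  have hinj : ∀ q (x : Fin m → ℝ), x ≠ 0 → (μ q)ᵀ *ᵥ x ≠ 0 := by
    intro q x hx h0
    apply hx
    rw [← dotProduct_self_eq_zero (v := x)]
    obtain ⟨v, hv⟩ := hsurj q x
    rw [Matrix.mulVecLin_apply] at hv
    calc x ⬝ᵥ x = x ⬝ᵥ (μ q *ᵥ v) := by rw [hv]
      _ = (x ᵥ* μ q) ⬝ᵥ v := Matrix.dotProduct_mulVec _ _ _
      _ = ((μ q)ᵀ *ᵥ x) ⬝ᵥ v := by rw [Matrix.mulVec_transpose]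
      _ = 0 := by rw [h0, zero_dotProduct]
  -- the constraint Gram matrix
  set S : (Fin n → ℝ) → Matrix (Fin m) (Fin m) ℝ := fun q => μ q * Mi * (μ q)ᵀ with hSdef
  have hS : ∀ q, (S q).PosDef := by
    intro q
    have hsemi : (S q).PosSemidef := by
      have := hMi.posSemidef.mul_mul_conjTranspose_same (μ q)
      simpa [hSdef] using this
    refine Matrix.PosDef.of_dotProduct_mulVec_pos hsemi.isHermitian ?_
    intro x hx
    have h1 : S q *ᵥ x = μ q *ᵥ (Mi *ᵥ ((μ q)ᵀ *ᵥ x)) := by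
      simp [hSdef, Matrix.mulVec_mulVec, Matrix.mul_assoc]
    have h2 : star x ⬝ᵥ (S q *ᵥ x) = star ((μ q)ᵀ *ᵥ x) ⬝ᵥ (Mi *ᵥ ((μ q)ᵀ *ᵥ x)) := by
      rw [h1]
      simp only [star_trivial]
      rw [Matrix.dotProduct_mulVec x, ← Matrix.mulVec_transpose]
    rw [h2]
    exact hMi.dotProduct_mulVec_pos (hinj q x hx)
  have hSdet : ∀ q, IsUnit (S q).det := fun q => isUnit_iff_ne_zero.mpr (hS q).det_pos.ne'
  -- smoothness
  have hμe : ∀ α i, ContDiff ℝ (⊤ : ℕ∞) fun q => μ q α i :=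
    fun α i => contDiff_pi.mp (contDiff_pi.mp hμ α) i
  have hG : ContDiff ℝ (⊤ : ℕ∞) (gradV V) := by
    rw [contDiff_pi]
    intro i
    exact (hV.fderiv_right htop).clm_apply contDiff_const
  have hSe : ∀ a b, ContDiff ℝ (⊤ : ℕ∞) fun q => S q a b := by
    intro a b
    simp only [hSdef, Matrix.mul_apply, Matrix.transpose_apply]
    exact ContDiff.sum fun j _ => (ContDiff.sum fun i _ =>
      (hμe a i).mul contDiff_const).mul (hμe b j)
  have hSi : ∀ a b, ContDiff ℝ (⊤ : ℕ∞) fun q => (S q)⁻¹ a b :=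
    contDiff_inv_entry' hSe fun q => (hS q).det_pos.ne'
  set w : ((Fin n → ℝ) × (Fin n → ℝ)) → Fin m → ℝ :=
    fun p α => ∑ i, fderiv ℝ (fun q => μ q α i) p.1 p.2 * p.2 i with hwdef
  have hw : ContDiff ℝ (⊤ : ℕ∞) w := by
    rw [contDiff_pi]
    intro α
    apply ContDiff.sum
    intro i _
    exact ((((hμe α i).fderiv_right htop).comp contDiff_fst).clm_apply contDiff_snd).mul
      (contDiff_pi.mp contDiff_snd i)
  set lamf : ((Fin n → ℝ) × (Fin n → ℝ)) → Fin m → ℝ :=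
    fun p => (S p.1)⁻¹ *ᵥ (μ p.1 *ᵥ (Mi *ᵥ gradV V p.1) - w p) with hlamfdef
  have hlamf : ContDiff ℝ (⊤ : ℕ∞) lamf := by
    apply contDiff_mulVec' (fun a b => (hSi a b).comp contDiff_fst)
    apply ContDiff.sub _ hw
    apply contDiff_mulVec' (fun a b => (hμe a b).comp contDiff_fst)
    have h1 : ContDiff ℝ (⊤ : ℕ∞) fun q : Fin n → ℝ => Mi *ᵥ gradV V q :=
      contDiff_mulVec' (A := fun _ => Mi) (fun a b => contDiff_const) hG
    exact h1.comp contDiff_fst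
  set acc : ((Fin n → ℝ) × (Fin n → ℝ)) → Fin n → ℝ :=
    fun p => Mi *ᵥ (-gradV V p.1 + (μ p.1)ᵀ *ᵥ lamf p) with haccdef
  have hacc : ContDiff ℝ (⊤ : ℕ∞) acc :=
    contDiff_mulVec' (A := fun _ => Mi) (fun a b => contDiff_const)
      (((hG.comp contDiff_fst).neg).add
        (contDiff_mulVec' (A := fun p => (μ p.1)ᵀ)
          (fun a b => by
            show ContDiff ℝ (⊤ : ℕ∞) fun p : (Fin n → ℝ) × (Fin n → ℝ) => μ p.1 b a
            exact (hμe b a).comp contDiff_fst) hlamf))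
  set F : ((Fin n → ℝ) × (Fin n → ℝ)) → ((Fin n → ℝ) × (Fin n → ℝ)) :=
    fun p => (p.2, acc p) with hFdef
  have hF : ContDiff ℝ (⊤ : ℕ∞) F := contDiff_snd.prodMk hacc
  -- algebraic identities
  have hMacc : ∀ p, M *ᵥ acc p = -gradV V p.1 + (μ p.1)ᵀ *ᵥ lamf p := by
    intro p
    rw [haccdef]
    simp only [Matrix.mulVec_mulVec]
    rw [Matrix.mul_nonsing_inv M hMdet, Matrix.one_mulVec]
  have hkey : ∀ p, μ p.1 *ᵥ acc p = -w p := by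
    intro p
    have h5 : S p.1 *ᵥ (lamf p) = μ p.1 *ᵥ (Mi *ᵥ gradV V p.1) - w p := by
      rw [hlamfdef, Matrix.mulVec_mulVec, Matrix.mul_nonsing_inv _ (hSdet p.1),
        Matrix.one_mulVec]
    calc μ p.1 *ᵥ acc p
        = (μ p.1 * Mi) *ᵥ (-gradV V p.1 + (μ p.1)ᵀ *ᵥ lamf p) := by
          rw [haccdef, Matrix.mulVec_mulVec]
      _ = -((μ p.1 * Mi) *ᵥ gradV V p.1) + S p.1 *ᵥ lamf p := by
          simp only [Matrix.mulVec_add, Matrix.mulVec_neg, Matrix.mulVec_mulVec, hSdef,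
            Matrix.mul_assoc]
      _ = -(μ p.1 *ᵥ (Mi *ᵥ gradV V p.1)) + (μ p.1 *ᵥ (Mi *ᵥ gradV V p.1) - w p) := by
          rw [h5, Matrix.mulVec_mulVec]
      _ = -w p := by abel
  have halg : ∀ (qq b vv : Fin n → ℝ) (lamv : Fin m → ℝ),
      M *ᵥ b = -gradV V qq + (μ qq)ᵀ *ᵥ lamv →
      w (qq, vv) + μ qq *ᵥ b = 0 →
      lamv = lamf (qq, vv) ∧ b = acc (qq, vv) := by
    intro qq b vv lamv e1 e2
    have hb : b = Mi *ᵥ (-gradV V qq + (μ qq)ᵀ *ᵥ lamv) := by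
      have h6 : Mi *ᵥ (M *ᵥ b) = b := by
        rw [Matrix.mulVec_mulVec, Matrix.nonsing_inv_mul M hMdet, Matrix.one_mulVec]
      rw [← h6, e1]
    have h3 : μ qq *ᵥ b = -(μ qq *ᵥ (Mi *ᵥ gradV V qq)) + S qq *ᵥ lamv := by
      rw [hb]
      simp only [Matrix.mulVec_add, Matrix.mulVec_neg, Matrix.mulVec_mulVec, hSdef,
        Matrix.mul_assoc]
    have h4 : μ qq *ᵥ b = -w (qq, vv) := eq_neg_of_add_eq_zero_right e2
    have hSlam : S qq *ᵥ lamv = μ qq *ᵥ (Mi *ᵥ gradV V qq) - w (qq, vv) := by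
      calc S qq *ᵥ lamv
          = μ qq *ᵥ (Mi *ᵥ gradV V qq)
            + (-(μ qq *ᵥ (Mi *ᵥ gradV V qq)) + S qq *ᵥ lamv) := by abel
        _ = μ qq *ᵥ (Mi *ᵥ gradV V qq) + -w (qq, vv) := by rw [← h3, h4]
        _ = μ qq *ᵥ (Mi *ᵥ gradV V qq) - w (qq, vv) := by abel
    have hlameq : lamv = lamf (qq, vv) := by
      have h8 : (S qq)⁻¹ *ᵥ (S qq *ᵥ lamv) = lamv := by
        rw [Matrix.mulVec_mulVec, Matrix.nonsing_inv_mul _ (hSdet qq), Matrix.one_mulVec]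
      rw [← h8, hSlam, hlamfdef]
    exact ⟨hlameq, by rw [hb, hlameq, haccdef]⟩
  -- derivative of the constraint along a curve
  have hCder : ∀ (y z : ℝ → Fin n → ℝ) (b : Fin n → ℝ) (t : ℝ),
      HasDerivAt y (z t) t → HasDerivAt z b t →
      HasDerivAt (fun s => μ (y s) *ᵥ z s) (w (y t, z t) + μ (y t) *ᵥ b) t := by
    intro y z b t hy hz
    rw [hasDerivAt_pi]
    intro α
    have hsum : HasDerivAt (fun s => ∑ i, μ (y s) α i * z s i)
        (∑ i, (fderiv ℝ (fun q => μ q α i) (y t) (z t) * z t i + μ (y t) α i * b i)) t := by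
      apply HasDerivAt.fun_sum
      intro i _
      have h1 : HasDerivAt (fun s => μ (y s) α i)
          (fderiv ℝ (fun q => μ q α i) (y t) (z t)) t :=
        ((((hμe α i).differentiable (by simp)) (y t)).hasFDerivAt).comp_hasDerivAt t hy
      exact h1.mul (hasDerivAt_pi.mp hz i)
    have hval : (w (y t, z t) + μ (y t) *ᵥ b) α
        = ∑ i, (fderiv ℝ (fun q => μ q α i) (y t) (z t) * z t i + μ (y t) α i * b i) := by
      simp [hwdef, Matrix.mulVec, dotProduct, Finset.sum_add_distrib]
    rw [hval]
    exact hsum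
  -- local solution of the reduced ODE
  have hF1 : ContDiffAt ℝ 1 F (q₀, v₀) := (hF.of_le hone).contDiffAt
  obtain ⟨x, hx₀, ε, hε, hxd⟩ := hF1.exists_forall_mem_closedBall_exists_eq_forall_mem_Ioo_hasDerivAt₀ t₀
  have hball : ball t₀ ε = Set.Ioo (t₀ - ε) (t₀ + ε) := Real.ball_eq_Ioo t₀ ε
  have hxI : ∀ t ∈ ball t₀ ε, HasDerivAt x (F (x t)) t := by
    intro t ht; exact hxd t (hball ▸ ht)
  set q : ℝ → Fin n → ℝ := fun t => (x t).1 with hqdef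
  set v : ℝ → Fin n → ℝ := fun t => (x t).2 with hvdef
  set lam : ℝ → Fin m → ℝ := fun t => lamf (x t) with hlamdef
  have ht₀I : t₀ ∈ ball t₀ ε := mem_ball_self hε
  have hqd : ∀ t ∈ ball t₀ ε, HasDerivAt q (v t) t := by
    intro t ht
    exact ((ContinuousLinearMap.fst ℝ (Fin n → ℝ) (Fin n → ℝ)).hasFDerivAt).comp_hasDerivAt
      t (hxI t ht)
  have hvd : ∀ t ∈ ball t₀ ε, HasDerivAt v (acc (x t)) t := by
    intro t ht
    exact ((ContinuousLinearMap.snd ℝ (Fin n → ℝ) (Fin n → ℝ)).hasFDerivAt).comp_hasDerivAt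
      t (hxI t ht)
  have hxcont : ContinuousOn x (ball t₀ ε) :=
    fun t ht => (hxI t ht).continuousAt.continuousWithinAt
  -- the constraint holds along x
  have hconstraint : ∀ t ∈ ball t₀ ε, μ (q t) *ᵥ v t = 0 := by
    have hderiv0 : ∀ t ∈ ball t₀ ε, HasDerivAt (fun s => μ (q s) *ᵥ v s) 0 t := by
      intro t ht
      have h1 := hCder q v (acc (x t)) t (hqd t ht) (hvd t ht)
      have h2 : w (q t, v t) + μ (q t) *ᵥ acc (x t) = 0 := by
        have := hkey (x t)
        rw [hqdef, hvdef]
        rw [this]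
        abel
      rw [h2] at h1
      exact h1
    have hc0 : μ (q t₀) *ᵥ v t₀ = 0 := by
      show μ (x t₀).1 *ᵥ (x t₀).2 = 0
      rw [hx₀]
      exact hcons
    intro t ht
    rcases le_or_gt t₀ t with hle | hlt
    · have hsub : Set.Icc t₀ t ⊆ ball t₀ ε := by
        intro s hs
        rw [hball] at ht ht₀I ⊢
        exact ⟨lt_of_lt_of_le ht₀I.1 hs.1, lt_of_le_of_lt hs.2 ht.2⟩
      have := constant_of_has_deriv_right_zero
        (f := fun s => μ (q s) *ᵥ v s) (a := t₀) (b := t)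
        (fun s hs => ((hderiv0 s (hsub hs)).continuousAt).continuousWithinAt)
        (fun s hs => ((hderiv0 s (hsub (Set.Ico_subset_Icc_self hs))).hasDerivWithinAt))
      have h9 : μ (q t) *ᵥ v t = μ (q t₀) *ᵥ v t₀ := this t (Set.right_mem_Icc.mpr hle)
      rw [h9, hc0]
    · have hsub : Set.Icc t t₀ ⊆ ball t₀ ε := by
        intro s hs
        rw [hball] at ht ht₀I ⊢
        exact ⟨lt_of_lt_of_le ht.1 hs.1, lt_of_le_of_lt hs.2 ht₀I.2⟩
      have := constant_of_has_deriv_right_zero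
        (f := fun s => μ (q s) *ᵥ v s) (a := t) (b := t₀)
        (fun s hs => ((hderiv0 s (hsub hs)).continuousAt).continuousWithinAt)
        (fun s hs => ((hderiv0 s (hsub (Set.Ico_subset_Icc_self hs))).hasDerivWithinAt))
      have h9 : μ (q t₀) *ᵥ v t₀ = μ (q t) *ᵥ v t := this t₀ (Set.right_mem_Icc.mpr hlt.le)
      rw [← h9, hc0]
  -- deriv computations
  have hdq : ∀ t ∈ ball t₀ ε, deriv q t = v t := fun t ht => (hqd t ht).deriv
  have hddq : ∀ t ∈ ball t₀ ε, deriv (deriv q) t = acc (x t) := by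
    intro t ht
    have h1 : deriv q =ᶠ[nhds t] v :=
      Filter.eventuallyEq_of_mem (isOpen_ball.mem_nhds ht) hdq
    rw [h1.deriv_eq]
    exact (hvd t ht).deriv
  -- regularity
  have h01 : (1 : WithTop ℕ∞) = 0 + 1 := by norm_num
  have h12 : (2 : WithTop ℕ∞) = 1 + 1 := by norm_num
  have hvC : ContDiffOn ℝ 1 v (ball t₀ ε) := by
    rw [h01, contDiffOn_succ_iff_deriv_of_isOpen isOpen_ball]
    refine ⟨fun t ht => ((hvd t ht).differentiableAt).differentiableWithinAt, by simp, ?_⟩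
    rw [contDiffOn_zero]
    exact ContinuousOn.congr (hacc.continuous.comp_continuousOn hxcont)
      (fun t ht => (hvd t ht).deriv)
  have hqC : ContDiffOn ℝ 2 q (ball t₀ ε) := by
    rw [h12, contDiffOn_succ_iff_deriv_of_isOpen isOpen_ball]
    exact ⟨fun t ht => ((hqd t ht).differentiableAt).differentiableWithinAt, by simp,
      hvC.congr hdq⟩
  have hlamC : ContinuousOn lam (ball t₀ ε) :=
    hlamf.continuous.comp_continuousOn hxcont
  -- assemble
  refine ⟨ε, hε, q, lam, ⟨hqC, hlamC, ?_, ?_, ?_⟩, ?_⟩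
  · intro t ht
    constructor
    · rw [hddq t ht]
      exact hMacc (x t)
    · rw [hdq t ht]
      exact hconstraint t ht
  · show (x t₀).1 = q₀
    rw [hx₀]
  · rw [hdq t₀ ht₀I]
    show (x t₀).2 = v₀
    rw [hx₀]
  -- uniqueness
  · rintro q' lam' ⟨hq'C, hlam'C, hDAE', hq'0, hdq'0⟩
    set v' : ℝ → Fin n → ℝ := deriv q' with hv'def
    set x' : ℝ → (Fin n → ℝ) × (Fin n → ℝ) := fun t => (q' t, v' t) with hx'def
    have hq'd : ∀ t ∈ ball t₀ ε, HasDerivAt q' (v' t) t := by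
      intro t ht
      exact ((hq'C.differentiableOn (by norm_num)).differentiableAt
        (isOpen_ball.mem_nhds ht)).hasDerivAt
    have hv'C : ContDiffOn ℝ 1 v' (ball t₀ ε) :=
      hq'C.deriv_of_isOpen isOpen_ball (by norm_num)
    have hv'd : ∀ t ∈ ball t₀ ε, HasDerivAt v' (deriv v' t) t := by
      intro t ht
      exact ((hv'C.differentiableOn (by norm_num)).differentiableAt
        (isOpen_ball.mem_nhds ht)).hasDerivAt
    -- identify lam' and the acceleration
    have hident : ∀ t ∈ ball t₀ ε,
        lam' t = lamf (x' t) ∧ deriv v' t = acc (x' t) := by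
      intro t ht
      have e1 : M *ᵥ deriv v' t = -gradV V (q' t) + (μ (q' t))ᵀ *ᵥ lam' t := (hDAE' t ht).1
      have hc0 : ∀ s ∈ ball t₀ ε, μ (q' s) *ᵥ v' s = 0 := fun s hs => (hDAE' s hs).2
      have hder0 : HasDerivAt (fun s => μ (q' s) *ᵥ v' s) 0 t :=
        (hasDerivAt_const t (0 : Fin m → ℝ)).congr_of_eventuallyEq
          (Filter.eventuallyEq_of_mem (isOpen_ball.mem_nhds ht) hc0)
      have hderw := hCder q' v' (deriv v' t) t (hq'd t ht) (hv'd t ht)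
      have e2 : w (q' t, v' t) + μ (q' t) *ᵥ deriv v' t = 0 := hderw.unique hder0
      exact halg (q' t) (deriv v' t) (v' t) (lam' t) e1 e2
    -- x' solves the same ODE
    have hx'ode : ∀ t ∈ ball t₀ ε, HasDerivAt x' (F (x' t)) t := by
      intro t ht
      have h1 := (hq'd t ht).prodMk (hv'd t ht)
      rw [(hident t ht).2] at h1
      exact h1
    have hx'cont : ContinuousOn x' (ball t₀ ε) :=
      fun t ht => (hx'ode t ht).continuousAt.continuousWithinAt
    have hx'0 : x' t₀ = x t₀ := by
      rw [hx₀]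
      show (q' t₀, v' t₀) = (q₀, v₀)
      rw [hq'0]
      rw [show v' t₀ = v₀ from hdq'0]
    -- open-closed argument on the connected ball
    haveI : PreconnectedSpace (ball t₀ ε) :=
      Subtype.preconnectedSpace (convex_ball t₀ ε).isPreconnected
    set B : Set (ball t₀ ε) := {t : ball t₀ ε | x' t = x t} with hBdef
    have hBclosed : IsClosed B := isClosed_eq hx'cont.restrict hxcont.restrict
    have hBopen : IsOpen B := by
      rw [isOpen_iff_mem_nhds]
      rintro ⟨s, hsI⟩ hsB
      have hsB' : x' s = x s := hsB
      obtain ⟨K, U, hU, hlip⟩ := ((hF.of_le hone).contDiffAt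
        (x := x s)).exists_lipschitzOnWith
      have hIs : ball t₀ ε ∈ nhds s := isOpen_ball.mem_nhds hsI
      have hx'U : ∀ᶠ t in nhds s, x' t ∈ U :=
        (hx'ode s hsI).continuousAt.preimage_mem_nhds (by rwa [hsB'])
      have hxU : ∀ᶠ t in nhds s, x t ∈ U :=
        (hxI s hsI).continuousAt.preimage_mem_nhds hU
      have hev1 : ∀ᶠ t in nhds s, HasDerivAt x' (F (x' t)) t ∧ x' t ∈ U :=
        ((Filter.eventually_mem_set.mpr hIs).mono (fun t ht => hx'ode t ht)).and hx'U
      have hev2 : ∀ᶠ t in nhds s, HasDerivAt x (F (x t)) t ∧ x t ∈ U :=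
        ((Filter.eventually_mem_set.mpr hIs).mono (fun t ht => hxI t ht)).and hxU
      have heq : x' =ᶠ[nhds s] x :=
        ODE_solution_unique_of_eventually (v := fun _ => F) (s := fun _ => U)
          (Filter.Eventually.of_forall fun _ => hlip) hev1 hev2 hsB'
      have hmem : Subtype.val ⁻¹' {t : ℝ | x' t = x t} ∈ nhds (⟨s, hsI⟩ : ball t₀ ε) :=
        continuousAt_subtype_val.preimage_mem_nhds heq
      exact Filter.mem_of_superset hmem fun u hu => hu
    have hBall : B = Set.univ := by
      rcases isClopen_iff.mp ⟨hBclosed, hBopen⟩ with h | h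
      · exfalso
        have hmem : (⟨t₀, ht₀I⟩ : ball t₀ ε) ∈ B := hx'0
        rw [h] at hmem
        exact hmem
      · exact h
    intro t ht
    have hxx : x' t = x t := by
      have hmem : (⟨t, ht⟩ : ball t₀ ε) ∈ B := hBall ▸ Set.mem_univ _
      exact hmem
    refine ⟨congrArg Prod.fst hxx, ?_⟩
    show lam' t = lamf (x t)
    rw [(hident t ht).1, hxx]
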